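/- arXiv:1410.0128 — 3 statements merged into one kernel-verified Lean document; each statement's English description precedes it below -/
import Mathlib

section
/- For all real constants a > 0, b > 0, c > 0, the function f(P) = (a·P + c) / Real.log (1 + b·P) is quasiconvex on the open interval (0, ∞); that is, for every real t, the sublevel set {P ∈ (0, ∞) : f(P) ≤ t} is convex. -/
/-- For all real constants `a > 0`, `b > 0`, `c > 0`, the function
`f(P) = (a·P + c) / log (1 + b·P)` is quasiconvex on `(0, ∞)`:
for every real `t`, the sublevel set `{P ∈ (0, ∞) | f P ≤ t}` is convex. -/
theorem quasiconvex_energy_per_bit (a b c : ℝ) (ha : 0 < a) (hb : 0 < b) (hc : 0 < c) :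
    ∀ t : ℝ,
      Convex ℝ {P : ℝ | P ∈ Set.Ioi (0 : ℝ) ∧ (a * P + c) / Real.log (1 + b * P) ≤ t} := by
  intro t
  have hlogpos : ∀ P : ℝ, P ∈ Set.Ioi (0 : ℝ) → 0 < Real.log (1 + b * P) := by
    intro P hP
    apply Real.log_pos
    have : 0 < b * P := mul_pos hb hP
    linarith
  -- rewrite set as sublevel of g P = a*P + c - t * log (1 + b*P)
  have hset : {P : ℝ | P ∈ Set.Ioi (0 : ℝ) ∧ (a * P + c) / Real.log (1 + b * P) ≤ t}
      = {P ∈ Set.Ioi (0 : ℝ) | a * P + c - t * Real.log (1 + b * P) ≤ 0} := by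
    ext P
    simp only [Set.mem_setOf_eq, Set.sep_setOf]
    constructor
    · rintro ⟨hP, hle⟩
      refine ⟨hP, ?_⟩
      have h := (div_le_iff₀ (hlogpos P hP)).mp hle
      linarith
    · rintro ⟨hP, hle⟩
      refine ⟨hP, (div_le_iff₀ (hlogpos P hP)).mpr ?_⟩
      linarith
  rw [hset]
  rcases le_or_gt t 0 with ht | ht
  · -- set is empty
    convert convex_empty (𝕜 := ℝ) (E := ℝ)
    ext P
    simp only [Set.mem_setOf_eq, Set.mem_empty_iff_false, iff_false, not_and]
    intro hP hle
    have hlog := hlogpos P hP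
    have h1 : t * Real.log (1 + b * P) ≤ 0 :=
      mul_nonpos_of_nonpos_of_nonneg ht hlog.le
    have : 0 < a * P + c := by
      have := mul_pos ha hP
      linarith
    linarith
  · -- g is convex on Ioi 0
    have hconc : ConcaveOn ℝ (Set.Ioi (0:ℝ)) (fun P => Real.log (1 + b * P)) := by
      have hlog : ConcaveOn ℝ (Set.Ioi (0:ℝ)) Real.log :=
        strictConcaveOn_log_Ioi.concaveOn
      constructor
      · exact convex_Ioi 0
      · intro x hx y hy p q hp hq hpq
        have hx' : (0:ℝ) < 1 + b * x := by nlinarith [hx.out]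
        have hy' : (0:ℝ) < 1 + b * y := by nlinarith [hy.out]
        have key := hlog.2 (Set.mem_Ioi.mpr hx') (Set.mem_Ioi.mpr hy') hp hq hpq
        simp only [smul_eq_mul] at key ⊢
        have harg : 1 + b * (p * x + q * y) = p * (1 + b * x) + q * (1 + b * y) := by
          ring_nf; nlinarith [hpq]
        rw [harg]
        exact key
    have hgconv : ConvexOn ℝ (Set.Ioi (0:ℝ))
        (fun P => a * P + c - t * Real.log (1 + b * P)) := by
      have h1 : ConvexOn ℝ (Set.Ioi (0:ℝ)) (fun P : ℝ => a * P + c) := by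
        constructor
        · exact convex_Ioi 0
        · intro x hx y hy p q hp hq hpq
          simp only [smul_eq_mul]
          nlinarith
      have h2 : ConvexOn ℝ (Set.Ioi (0:ℝ))
          (fun P => -(t * Real.log (1 + b * P))) := by
        have h2' : ConcaveOn ℝ (Set.Ioi (0:ℝ))
            (fun P => t * Real.log (1 + b * P)) := by
          simpa [smul_eq_mul] using hconc.smul ht.le
        exact h2'.neg
      have := h1.add h2
      convert this using 1
      · rfl
      · funext P
        simp [sub_eq_add_neg]
    exact hgconv.convex_le 0
end

section
/- For all real constants a > 0, b > 0, c > 0, the function f(P) = (a·P + c) / Real.log (1 + b·P) attains a global minimum on (0, ∞) at a unique point: there exists exactly one P* ∈ (0, ∞) such that f(P*) ≤ f(P) for all P ∈ (0, ∞). -/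
open Real Set

/-- For all real constants `a > 0`, `b > 0`, `c > 0`, the function
`f(P) = (a·P + c) / log (1 + b·P)` attains a global minimum on `(0, ∞)` at a
unique point: there exists exactly one `P* ∈ (0, ∞)` with `f P* ≤ f P`
for all `P ∈ (0, ∞)`. -/
theorem exists_unique_global_min_energy_per_bit (a b c : ℝ)
    (ha : 0 < a) (hb : 0 < b) (hc : 0 < c) :
    ∃! Pstar : ℝ, Pstar ∈ Set.Ioi (0 : ℝ) ∧
      ∀ P ∈ Set.Ioi (0 : ℝ),
        (a * Pstar + c) / Real.log (1 + b * Pstar) ≤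
          (a * P + c) / Real.log (1 + b * P) := by
  set f : ℝ → ℝ := fun P => (a * P + c) / Real.log (1 + b * P) with hf
  set g : ℝ → ℝ := fun P => a * Real.log (1 + b * P) - b * (a * P + c) / (1 + b * P) with hg
  have hpos : ∀ P : ℝ, 0 ≤ P → (0:ℝ) < 1 + b * P := by
    intro P hP; nlinarith
  -- derivative of g
  have hgd : ∀ P : ℝ, 0 ≤ P → HasDerivAt g (b ^ 2 * (a * P + c) / (1 + b * P) ^ 2) P := by
    intro P hP
    have h1 : (0:ℝ) < 1 + b * P := hpos P hP
    have hl : HasDerivAt (fun P : ℝ => 1 + b * P) b P := by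
      simpa using ((hasDerivAt_id P).const_mul b).const_add 1
    have hlog : HasDerivAt (fun P : ℝ => Real.log (1 + b * P)) (b / (1 + b * P)) P :=
      hl.log (ne_of_gt h1)
    have hu : HasDerivAt (fun P : ℝ => a * P + c) a P := by
      simpa using ((hasDerivAt_id P).const_mul a).add_const c
    have hq : HasDerivAt (fun P : ℝ => b * (a * P + c) / (1 + b * P))
        ((b * a * (1 + b * P) - b * (a * P + c) * b) / (1 + b * P) ^ 2) P :=
      (hu.const_mul b).div hl (ne_of_gt h1)
    have := (hlog.const_mul a).sub hq
    refine this.congr_deriv ?_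
    field_simp
    ring
  have hgc : ContinuousOn g (Ici 0) := fun P hP =>
    ((hgd P hP).continuousAt).continuousWithinAt
  have hgmono : StrictMonoOn g (Ici 0) := by
    apply strictMonoOn_of_deriv_pos (convex_Ici 0) hgc
    intro P hP
    rw [interior_Ici] at hP
    rw [(hgd P (le_of_lt hP)).deriv]
    have hP' : (0:ℝ) < P := hP
    positivity
  have hg0 : g 0 = -(b * c) := by simp [hg]
  -- a point where g is positive
  set P₁ : ℝ := Real.exp ((a + b * c) / a + 1) / b with hP₁
  have hP₁pos : 0 < P₁ := div_pos (Real.exp_pos _) hb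
  have hgP₁ : 0 < g P₁ := by
    have h1 : (0:ℝ) < 1 + b * P₁ := hpos P₁ hP₁pos.le
    have hbp : b * P₁ = Real.exp ((a + b * c) / a + 1) := by
      rw [hP₁]; field_simp
    have hlog1 : (a + b * c) / a + 1 < Real.log (1 + b * P₁) := by
      have := Real.log_lt_log (Real.exp_pos ((a + b * c) / a + 1))
        (show Real.exp ((a + b * c) / a + 1) < 1 + b * P₁ by rw [hbp]; linarith)
      simpa [Real.log_exp] using this
    have hlog2 : (a + b * c) / a < Real.log (1 + b * P₁) := by linarith
    have h3 : a + b * c < a * Real.log (1 + b * P₁) := by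
      have := (div_lt_iff₀ ha).mp hlog2
      linarith [mul_comm a (Real.log (1 + b * P₁))]
    have h4 : b * (a * P₁ + c) / (1 + b * P₁) ≤ a + b * c := by
      rw [div_le_iff₀ h1]
      nlinarith [mul_nonneg (mul_nonneg (mul_nonneg hb.le hb.le) hc.le) hP₁pos.le]
    simp only [hg]
    linarith
  -- zero of g
  have hivt : (0:ℝ) ∈ Ioo (g 0) (g P₁) := ⟨by rw [hg0]; nlinarith, hgP₁⟩
  obtain ⟨P₀, hP₀mem, hgP₀⟩ :=
    intermediate_value_Ioo hP₁pos.le (hgc.mono (Icc_subset_Ici_self)) hivt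
  have hP₀pos : 0 < P₀ := hP₀mem.1
  -- derivative of f
  have hlogpos : ∀ P : ℝ, 0 < P → 0 < Real.log (1 + b * P) := by
    intro P hP
    apply Real.log_pos
    nlinarith
  have hfd : ∀ P : ℝ, 0 < P → HasDerivAt f (g P / (Real.log (1 + b * P)) ^ 2) P := by
    intro P hP
    have h1 : (0:ℝ) < 1 + b * P := hpos P hP.le
    have hL : (0:ℝ) < Real.log (1 + b * P) := hlogpos P hP
    have hl : HasDerivAt (fun P : ℝ => 1 + b * P) b P := by
      simpa using ((hasDerivAt_id P).const_mul b).const_add 1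
    have hlog : HasDerivAt (fun P : ℝ => Real.log (1 + b * P)) (b / (1 + b * P)) P :=
      hl.log (ne_of_gt h1)
    have hu : HasDerivAt (fun P : ℝ => a * P + c) a P := by
      simpa using ((hasDerivAt_id P).const_mul a).add_const c
    have := hu.div hlog (ne_of_gt hL)
    refine this.congr_deriv ?_
    simp only [hg]
    field_simp
  have hfc : ContinuousOn f (Ioi 0) := fun P hP =>
    ((hfd P hP).continuousAt).continuousWithinAt
  -- f strictly decreasing on (0, P₀]
  have hfa : StrictAntiOn f (Ioc 0 P₀) := by
    apply strictAntiOn_of_deriv_neg (convex_Ioc 0 P₀)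
      (hfc.mono (fun x hx => hx.1))
    intro P hP
    rw [interior_Ioc] at hP
    rw [(hfd P hP.1).deriv]
    have hgneg : g P < 0 := by
      rw [← hgP₀]
      exact hgmono hP.1.le hP₀pos.le hP.2
    have hL : (0:ℝ) < Real.log (1 + b * P) := hlogpos P hP.1
    exact div_neg_of_neg_of_pos hgneg (by positivity)
  -- f strictly increasing on [P₀, ∞)
  have hfm : StrictMonoOn f (Ici P₀) := by
    apply strictMonoOn_of_deriv_pos (convex_Ici P₀)
      (hfc.mono (fun x hx => lt_of_lt_of_le hP₀pos hx))
    intro P hP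
    rw [interior_Ici] at hP
    have hPpos : 0 < P := lt_trans hP₀pos hP
    rw [(hfd P hPpos).deriv]
    have hgpos : 0 < g P := by
      rw [← hgP₀]
      exact hgmono hP₀pos.le hPpos.le hP
    have hL : (0:ℝ) < Real.log (1 + b * P) := hlogpos P hPpos
    exact div_pos hgpos (by positivity)
  -- strict minimality away from P₀
  have hstrict : ∀ P : ℝ, 0 < P → P ≠ P₀ → f P₀ < f P := by
    intro P hP hne
    rcases lt_or_gt_of_ne hne with h | h
    · exact hfa ⟨hP, h.le⟩ ⟨hP₀pos, le_refl _⟩ h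
    · exact hfm (self_mem_Ici) h.le h
  refine ⟨P₀, ⟨hP₀pos, ?_⟩, ?_⟩
  · intro P hP
    rcases eq_or_ne P P₀ with h | h
    · rw [h]
    · exact (hstrict P hP h).le
  · rintro Q ⟨hQpos, hQmin⟩
    by_contra hne
    have h1 : f P₀ < f Q := hstrict Q hQpos hne
    have h2 : f Q ≤ f P₀ := hQmin P₀ hP₀pos
    linarith
end

section
/- For all real constants a > 0, b > 0, c > 0, the function f(P) = (a·P + c) / Real.log (1 + b·P) is unimodal on (0, ∞): there exists P* ∈ (0, ∞) such that f is antitone (non-increasing) on the interval (0, P*] and monotone (non-decreasing) on the interval [P*, ∞). -/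
open Real Set

/-- For all real constants `a > 0`, `b > 0`, `c > 0`, the function
`f(P) = (a·P + c) / log (1 + b·P)` is unimodal on `(0, ∞)`:
there exists `P* ∈ (0, ∞)` such that `f` is antitone on `(0, P*]` and
monotone on `[P*, ∞)`. -/
theorem unimodal_energy_per_bit (a b c : ℝ) (ha : 0 < a) (hb : 0 < b) (hc : 0 < c) :
    ∃ Pstar ∈ Set.Ioi (0 : ℝ),
      AntitoneOn (fun P : ℝ => (a * P + c) / Real.log (1 + b * P)) (Set.Ioc 0 Pstar) ∧
      MonotoneOn (fun P : ℝ => (a * P + c) / Real.log (1 + b * P)) (Set.Ici Pstar) := by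
  set f : ℝ → ℝ := fun P => (a * P + c) / Real.log (1 + b * P) with hf
  set g : ℝ → ℝ := fun P => a * Real.log (1 + b * P) - b * (a * P + c) / (1 + b * P) with hgdef
  -- positivity of 1 + b P for P ≥ 0
  have hpos : ∀ P : ℝ, 0 ≤ P → 0 < 1 + b * P := by
    intro P hP; nlinarith
  have hlogpos : ∀ P : ℝ, 0 < P → 0 < Real.log (1 + b * P) := by
    intro P hP
    apply Real.log_pos; nlinarith
  -- derivative facts
  have haff : ∀ P : ℝ, HasDerivAt (fun P : ℝ => 1 + b * P) b P := by
    intro P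
    simpa using ((hasDerivAt_id P).const_mul b).const_add 1
  have hnum : ∀ P : ℝ, HasDerivAt (fun P : ℝ => a * P + c) a P := by
    intro P
    simpa using ((hasDerivAt_id P).const_mul a).add_const c
  have hlogD : ∀ P : ℝ, 0 ≤ P →
      HasDerivAt (fun P : ℝ => Real.log (1 + b * P)) (b / (1 + b * P)) P := by
    intro P hP
    exact (haff P).log (ne_of_gt (hpos P hP))
  have hgD : ∀ P : ℝ, 0 ≤ P →
      HasDerivAt g (b ^ 2 * (a * P + c) / (1 + b * P) ^ 2) P := by
    intro P hP
    have h1 := ((hlogD P hP).const_mul a).sub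
      (((hnum P).const_mul b).div (haff P) (ne_of_gt (hpos P hP)))
    refine h1.congr_deriv ?_
    have h2 : (1 + b * P) ≠ 0 := ne_of_gt (hpos P hP)
    field_simp
    ring
  -- g is strictly increasing on [0, ∞)
  have hgcont : ContinuousOn g (Ici 0) := by
    apply ContinuousOn.sub
    · apply ContinuousOn.mul continuousOn_const
      apply ContinuousOn.log (by fun_prop)
      intro x hx; exact ne_of_gt (hpos x hx)
    · exact ContinuousOn.div (by fun_prop) (by fun_prop)
        (fun x hx => ne_of_gt (hpos x hx))
  have hgmono : StrictMonoOn g (Ici 0) := by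
    apply strictMonoOn_of_deriv_pos (convex_Ici 0) hgcont
    intro x hx
    rw [interior_Ici] at hx
    have hx0 : (0 : ℝ) ≤ x := le_of_lt hx
    rw [(hgD x hx0).deriv]
    have := hpos x hx0
    positivity
  -- g 0 < 0
  have hg0 : g 0 < 0 := by
    simp only [hgdef]
    norm_num
    positivity
  -- g is positive somewhere
  set P₁ : ℝ := Real.exp ((a + b * c) / a) / b with hP1def
  have hP1pos : 0 < P₁ := by positivity
  have hgP1 : 0 < g P₁ := by
    have h1 : 1 + b * P₁ = 1 + Real.exp ((a + b * c) / a) := by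
      rw [hP1def]; field_simp
    have h2 : Real.exp ((a + b * c) / a) < 1 + b * P₁ := by
      rw [h1]; linarith
    have h3 : (a + b * c) / a < Real.log (1 + b * P₁) := by
      rw [← Real.log_exp ((a + b * c) / a)]
      exact Real.log_lt_log (Real.exp_pos _) h2
    have h4 : a + b * c < a * Real.log (1 + b * P₁) := by
      rw [div_lt_iff₀ ha] at h3; linarith [h3]
    have h5 : b * (a * P₁ + c) / (1 + b * P₁) ≤ a + b * c := by
      rw [div_le_iff₀ (hpos P₁ (le_of_lt hP1pos))]
      nlinarith [mul_pos (mul_pos hb hb) (mul_pos hc hP1pos), hP1pos]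
    simp only [hgdef]
    linarith
  -- intermediate value: find P* with g P* = 0
  obtain ⟨Pstar, hPs, hgPs⟩ :=
    intermediate_value_Ioo (le_of_lt hP1pos) (hgcont.mono Icc_subset_Ici_self)
      (show (0:ℝ) ∈ Ioo (g 0) (g P₁) from ⟨hg0, hgP1⟩)
  have hPspos : 0 < Pstar := hPs.1
  -- derivative of f for P > 0
  have hfD : ∀ P : ℝ, 0 < P →
      HasDerivAt f (g P / (Real.log (1 + b * P)) ^ 2) P := by
    intro P hP
    have hlne : Real.log (1 + b * P) ≠ 0 := ne_of_gt (hlogpos P hP)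
    have h1 := (hnum P).div (hlogD P hP.le) hlne
    refine h1.congr_deriv ?_
    have h2 : (1 + b * P) ≠ 0 := ne_of_gt (hpos P hP.le)
    simp only [hgdef]
    field_simp
  have hfcont : ContinuousOn f (Ioi 0) := by
    apply ContinuousOn.div (by fun_prop)
    · apply ContinuousOn.log (by fun_prop)
      intro x hx; exact ne_of_gt (hpos x (le_of_lt hx))
    · intro x hx; exact ne_of_gt (hlogpos x hx)
  refine ⟨Pstar, hPspos, ?_, ?_⟩
  · -- antitone on (0, P*]
    apply antitoneOn_of_deriv_nonpos (convex_Ioc 0 Pstar)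
      (hfcont.mono (fun x hx => hx.1))
    · rw [interior_Ioc]
      intro x hx
      exact ((hfD x hx.1).differentiableAt).differentiableWithinAt
    · rw [interior_Ioc]
      intro x hx
      rw [(hfD x hx.1).deriv]
      have hgx : g x < 0 := by
        have := hgmono (le_of_lt hx.1) (le_of_lt hPspos) hx.2
        rw [hgPs] at this; exact this
      apply div_nonpos_of_nonpos_of_nonneg (le_of_lt hgx)
      positivity
  · -- monotone on [P*, ∞)
    apply monotoneOn_of_deriv_nonneg (convex_Ici Pstar)
      (hfcont.mono (fun x hx => lt_of_lt_of_le hPspos hx))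
    · rw [interior_Ici]
      intro x hx
      exact ((hfD x (lt_trans hPspos hx)).differentiableAt).differentiableWithinAt
    · rw [interior_Ici]
      intro x hx
      rw [(hfD x (lt_trans hPspos hx)).deriv]
      have hgx : 0 < g x := by
        have := hgmono (le_of_lt hPspos) (le_of_lt (lt_trans hPspos hx)) hx
        rw [hgPs] at this; exact this
      apply div_nonneg (le_of_lt hgx)
      positivity
end
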